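/- In the free product G = C₂ * C₃ = ⟨s,t | s² = t³ = 1⟩ with S = {s,t}, every assignment φ(s) = a, φ(t) = b with a, b ∈ ℝ extends to a weight function on (G,S), and such a weight function is bounded if and only if a + b ≤ 0 and a + 2b ≤ 0. -/

import Mathlib

/-- The group `G = C₂ * C₃ = ⟨s, t | s² = t³ = 1⟩` (isomorphic to `PSL₂(ℤ)`), as a presented
group on two generators. -/
def ModularGroup' : Type :=
  PresentedGroup ({FreeGroup.of 0 ^ 2, FreeGroup.of 1 ^ 3} : Set (FreeGroup (Fin 2)))

noncomputable instance : Group ModularGroup' := by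
  unfold ModularGroup'; infer_instance

/-- The generators `s` (of order 2) and `t` (of order 3) of `C₂ * C₃`. -/
def modularGen : Fin 2 → ModularGroup' := fun i =>
  PresentedGroup.of (rels := ({FreeGroup.of 0 ^ 2, FreeGroup.of 1 ^ 3} :
    Set (FreeGroup (Fin 2)))) i

/-- The length function `ℓ` on `C₂ * C₃` with respect to `S = {s, t}`. -/
noncomputable def modularLen (g : ModularGroup') : ℕ :=
  sInf {n : ℕ | ∃ w : List (Fin 2), w.length = n ∧ (w.map modularGen).prod = g}

namespace MG

abbrev mrels : Set (FreeGroup (Fin 2)) :=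
  ({FreeGroup.of 0 ^ 2, FreeGroup.of 1 ^ 3} : Set (FreeGroup (Fin 2)))

lemma gen_sq : modularGen 0 ^ 2 = 1 := by
  show PresentedGroup.mk mrels (FreeGroup.of 0) ^ 2 = 1
  refine (map_pow (PresentedGroup.mk mrels) (FreeGroup.of 0) 2).symm.trans ?_
  exact (QuotientGroup.eq_one_iff _).mpr
    (Subgroup.subset_normalClosure (Or.inl rfl))

lemma gen_cube : modularGen 1 ^ 3 = 1 := by
  show PresentedGroup.mk mrels (FreeGroup.of 1) ^ 3 = 1
  refine (map_pow (PresentedGroup.mk mrels) (FreeGroup.of 1) 3).symm.trans ?_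
  exact (QuotientGroup.eq_one_iff _).mpr
    (Subgroup.subset_normalClosure (Or.inr rfl))

lemma gen_ss : modularGen 0 * modularGen 0 = 1 := by
  have := gen_sq; rwa [pow_two] at this

lemma gen_ttt : modularGen 1 * (modularGen 1 * modularGen 1) = 1 := by
  have := gen_cube; rwa [pow_succ, pow_two, mul_assoc] at this

/-- Reduced words: no `ss` and no `ttt`. -/
def Red (w : List (Fin 2)) : Prop := ¬ ([0,0] <:+: w) ∧ ¬ ([1,1,1] <:+: w)

instance : DecidablePred Red := fun w => by unfold Red; infer_instance

lemma red_nil : Red ([] : List (Fin 2)) := by decide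

lemma Red.tail {x : Fin 2} {w : List (Fin 2)} (h : Red (x :: w)) : Red w :=
  ⟨fun h' => h.1 (List.infix_cons h'), fun h' => h.2 (List.infix_cons h')⟩

lemma not_red00 (r : List (Fin 2)) : ¬ Red (0 :: 0 :: r) := fun h =>
  h.1 ⟨[], r, rfl⟩

lemma not_red111 (r : List (Fin 2)) : ¬ Red (1 :: 1 :: 1 :: r) := fun h =>
  h.2 ⟨[], r, rfl⟩

lemma red_cons0 {w : List (Fin 2)} (h : Red w) (h0 : ∀ r, w ≠ 0 :: r) :
    Red (0 :: w) := by
  constructor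
  · intro hi
    rcases List.infix_cons_iff.mp hi with hp | hi
    · rw [List.cons_prefix_cons] at hp
      rcases hp.2 with ⟨tl, htl⟩
      exact h0 tl htl.symm
    · exact h.1 hi
  · intro hi
    rcases List.infix_cons_iff.mp hi with hp | hi
    · rw [List.cons_prefix_cons] at hp
      exact absurd hp.1 (by decide)
    · exact h.2 hi

lemma red_cons1 {w : List (Fin 2)} (h : Red w) (h1 : ∀ r, w ≠ 1 :: 1 :: r) :
    Red (1 :: w) := by
  constructor
  · intro hi
    rcases List.infix_cons_iff.mp hi with hp | hi
    · rw [List.cons_prefix_cons] at hp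
      exact absurd hp.1 (by decide)
    · exact h.1 hi
  · intro hi
    rcases List.infix_cons_iff.mp hi with hp | hi
    · rw [List.cons_prefix_cons] at hp
      rcases hp.2 with ⟨tl, htl⟩
      exact h1 tl htl.symm
    · exact h.2 hi

lemma not_red_iff {w : List (Fin 2)} : ¬ Red w ↔ ([0,0] <:+: w) ∨ ([1,1,1] <:+: w) := by
  unfold Red; tauto

/-- products of generator words -/
noncomputable def prodOf (w : List (Fin 2)) : ModularGroup' := (w.map modularGen).prod

lemma prodOf_nil : prodOf [] = 1 := rfl
lemma prodOf_cons (x : Fin 2) (w : List (Fin 2)) :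
    prodOf (x :: w) = modularGen x * prodOf w := by simp [prodOf]
lemma prodOf_append (u v : List (Fin 2)) : prodOf (u ++ v) = prodOf u * prodOf v := by
  simp [prodOf]

/-- type of reduced words -/
def RW : Type := {w : List (Fin 2) // Red w}

def σf : List (Fin 2) → List (Fin 2)
  | ⟨0,_⟩ :: r => r
  | w => 0 :: w

def τf : List (Fin 2) → List (Fin 2)
  | ⟨1,_⟩ :: ⟨1,_⟩ :: r => r
  | ⟨1,_⟩ :: r => 1 :: 1 :: r
  | w => 1 :: w

lemma fin2 (x : Fin 2) : x = 0 ∨ x = 1 := by omega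

lemma σf_red {w : List (Fin 2)} (h : Red w) : Red (σf w) := by
  rcases w with _ | ⟨x, r⟩
  · simpa [σf] using red_cons0 red_nil (by simp)
  · rcases fin2 x with rfl | rfl
    · exact h.tail
    · show Red (0 :: 1 :: r)
      exact red_cons0 h (by simp)

lemma σf_σf {w : List (Fin 2)} (h : Red w) : σf (σf w) = w := by
  rcases w with _ | ⟨x, r⟩
  · rfl
  · rcases fin2 x with rfl | rfl
    · show σf r = 0 :: r
      rcases r with _ | ⟨y, q⟩
      · rfl
      · rcases fin2 y with rfl | rfl
        · exact absurd h (not_red00 q)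
        · rfl
    · rfl

lemma τf_red {w : List (Fin 2)} (h : Red w) : Red (τf w) := by
  rcases w with _ | ⟨x, r⟩
  · simpa [τf] using red_cons1 red_nil (by simp)
  · rcases fin2 x with rfl | rfl
    · show Red (1 :: 0 :: r)
      exact red_cons1 h (by simp)
    · rcases r with _ | ⟨y, q⟩
      · show Red [1, 1]
        exact red_cons1 h (by simp)
      · rcases fin2 y with rfl | rfl
        · show Red (1 :: 1 :: 0 :: q)
          exact red_cons1 h (by simp)
        · exact h.tail.tail

lemma τf_τf_τf {w : List (Fin 2)} (h : Red w) : τf (τf (τf w)) = w := by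
  rcases w with _ | ⟨x, r⟩
  · rfl
  · rcases fin2 x with rfl | rfl
    · rfl
    · rcases r with _ | ⟨y, q⟩
      · rfl
      · rcases fin2 y with rfl | rfl
        · rfl
        · rcases q with _ | ⟨z, p⟩
          · rfl
          · rcases fin2 z with rfl | rfl
            · rfl
            · exact absurd h (not_red111 p)

noncomputable def σe : Equiv.Perm RW where
  toFun w := ⟨σf w.1, σf_red w.2⟩
  invFun w := ⟨σf w.1, σf_red w.2⟩
  left_inv w := Subtype.ext (σf_σf w.2)
  right_inv w := Subtype.ext (σf_σf w.2)

noncomputable def τe : Equiv.Perm RW where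
  toFun w := ⟨τf w.1, τf_red w.2⟩
  invFun w := ⟨τf (τf w.1), τf_red (τf_red w.2)⟩
  left_inv w := Subtype.ext (τf_τf_τf w.2)
  right_inv w := Subtype.ext (by
    have h1 : Red (τf w.1) := τf_red w.2
    have h2 : Red (τf (τf w.1)) := τf_red h1
    show τf (τf (τf w.1)) = w.1
    exact τf_τf_τf w.2)

noncomputable def permOf : Fin 2 → Equiv.Perm RW := fun i =>
  if i = 0 then σe else τe

lemma σe_sq : σe * σe = 1 := by
  ext w
  exact (Subtype.ext (σf_σf w.2) : σe (σe w) = w)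

lemma τe_cube : τe * (τe * τe) = 1 := by
  ext w
  exact (Subtype.ext (τf_τf_τf w.2) : τe (τe (τe w)) = w)

lemma perm_rels : ∀ r ∈ mrels, (FreeGroup.lift permOf) r = 1 := by
  rintro r (rfl | rfl)
  · rw [map_pow, FreeGroup.lift_apply_of, pow_two]
    simpa [permOf] using σe_sq
  · rw [map_pow, FreeGroup.lift_apply_of, pow_succ, pow_two, mul_assoc]
    simpa [permOf] using τe_cube

noncomputable def ρ : ModularGroup' →* Equiv.Perm RW :=
  PresentedGroup.toGroup perm_rels

lemma ρ_gen (i : Fin 2) : ρ (modularGen i) = permOf i :=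
  PresentedGroup.toGroup.of perm_rels

lemma prodOf_σf (w : List (Fin 2)) : prodOf (σf w) = modularGen 0 * prodOf w := by
  rcases w with _ | ⟨x, r⟩
  · rfl
  · rcases fin2 x with rfl | rfl
    · show prodOf r = modularGen 0 * prodOf (0 :: r)
      rw [prodOf_cons, ← mul_assoc, gen_ss, one_mul]
    · rfl

lemma prodOf_τf (w : List (Fin 2)) : prodOf (τf w) = modularGen 1 * prodOf w := by
  rcases w with _ | ⟨x, r⟩
  · rfl
  · rcases fin2 x with rfl | rfl
    · rfl
    · rcases r with _ | ⟨y, q⟩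
      · show prodOf [1, 1] = modularGen 1 * prodOf [1]
        simp [prodOf]
      · rcases fin2 y with rfl | rfl
        · rfl
        · show prodOf q = modularGen 1 * prodOf (1 :: 1 :: q)
          rw [prodOf_cons, prodOf_cons, ← mul_assoc, ← mul_assoc]
          rw [show modularGen 1 * modularGen 1 * modularGen 1 = 1 from by
            have := gen_ttt; rwa [← mul_assoc] at this, one_mul]

lemma prodOf_ρ (g : ModularGroup') (w : RW) : prodOf (ρ g w).1 = g * prodOf w.1 := by
  revert w
  let H : Subgroup ModularGroup' :=
    { carrier := {g | ∀ w : RW, prodOf (ρ g w).1 = g * prodOf w.1}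
      one_mem' := by intro w; simp
      mul_mem' := by
        intro x y hx hy w
        have : ρ (x * y) w = ρ x (ρ y w) := by rw [map_mul]; rfl
        rw [this, hx, hy, mul_assoc]
      inv_mem' := by
        intro x hx w
        have h2 := hx (ρ x⁻¹ w)
        have : ρ x (ρ x⁻¹ w) = w := by
          rw [← Equiv.Perm.mul_apply, ← map_mul, mul_inv_cancel, map_one]; rfl
        rw [this] at h2
        rw [eq_inv_mul_iff_mul_eq, ← h2] }
  intro w
  refine PresentedGroup.generated_by _ H (fun j => ?_) g w
  intro v
  show prodOf (ρ (modularGen j) v).1 = modularGen j * prodOf v.1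
  rw [ρ_gen]
  rcases fin2 j with rfl | rfl
  · exact prodOf_σf v.1
  · exact prodOf_τf v.1

/-- the normal form of a group element -/
noncomputable def nf (g : ModularGroup') : RW := ρ g ⟨[], red_nil⟩

lemma prodOf_nf (g : ModularGroup') : prodOf (nf g).1 = g := by
  have := prodOf_ρ g ⟨[], red_nil⟩
  simpa [nf, prodOf] using this

lemma σf_eq_cons {r : List (Fin 2)} (h : Red (0 :: r)) : σf r = 0 :: r := by
  rcases r with _ | ⟨y, q⟩
  · rfl
  · rcases fin2 y with rfl | rfl
    · exact absurd h (not_red00 q)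
    · rfl

lemma τf_eq_cons {r : List (Fin 2)} (h : Red (1 :: r)) : τf r = 1 :: r := by
  rcases r with _ | ⟨y, q⟩
  · rfl
  · rcases fin2 y with rfl | rfl
    · rfl
    · rcases q with _ | ⟨z, p⟩
      · rfl
      · rcases fin2 z with rfl | rfl
        · rfl
        · exact absurd h (not_red111 p)

/-- the normal form of the product of a reduced word is that word -/
lemma nf_prodOf {w : List (Fin 2)} (h : Red w) : (nf (prodOf w)).1 = w := by
  induction w with
  | nil => simp [nf, prodOf, map_one]; rfl
  | cons x r ih =>
    have hr := h.tail
    have : nf (prodOf (x :: r)) = ρ (modularGen x) (nf (prodOf r)) := by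
      rw [nf, nf, prodOf_cons, map_mul]; rfl
    rw [this]
    have hnf : (nf (prodOf r)).1 = r := ih hr
    rcases fin2 x with rfl | rfl
    · rw [ρ_gen]
      show σf (nf (prodOf r)).1 = 0 :: r
      rw [hnf]; exact σf_eq_cons h
    · rw [ρ_gen]
      show τf (nf (prodOf r)).1 = 1 :: r
      rw [hnf]; exact τf_eq_cons h

/-- an unreduced word can be shortened without changing its product -/
lemma shorten {w : List (Fin 2)} (h : ¬ Red w) :
    ∃ v : List (Fin 2), prodOf v = prodOf w ∧ v.length < w.length := by
  rcases not_red_iff.mp h with ⟨p, q, hw⟩ | ⟨p, q, hw⟩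
  · refine ⟨p ++ q, ?_, ?_⟩
    · have h00 : prodOf [0, 0] = 1 := by simpa [prodOf] using gen_ss
      rw [← hw, prodOf_append, prodOf_append, prodOf_append, h00, mul_one]
    · rw [← hw]; simp
  · refine ⟨p ++ q, ?_, ?_⟩
    · have h111 : prodOf [1, 1, 1] = 1 := by simpa [prodOf, mul_assoc] using gen_ttt
      rw [← hw, prodOf_append, prodOf_append, prodOf_append, h111, mul_one]
    · rw [← hw]; simp; omega
  
/-- every word is at least as long as the normal form of its product -/
lemma nf_length_le : ∀ n (w : List (Fin 2)), w.length ≤ n →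
    (nf (prodOf w)).1.length ≤ w.length := by
  intro n
  induction n with
  | zero =>
    intro w hw
    rw [List.length_eq_zero_iff.mp (Nat.le_zero.mp hw)]
    simp [nf_prodOf red_nil]
  | succ n ih =>
    intro w hw
    by_cases h : Red w
    · rw [nf_prodOf h]
    · obtain ⟨v, hv, hlt⟩ := shorten h
      calc (nf (prodOf w)).1.length = (nf (prodOf v)).1.length := by rw [hv]
        _ ≤ v.length := ih v (by omega)
        _ ≤ w.length := by omega

lemma modularLen_eq (g : ModularGroup') : modularLen g = (nf g).1.length := by
  apply le_antisymm
  · exact Nat.sInf_le ⟨(nf g).1, rfl, prodOf_nf g⟩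
  · have hne : {n : ℕ | ∃ w : List (Fin 2), w.length = n ∧ (w.map modularGen).prod = g}.Nonempty :=
      ⟨(nf g).1.length, ⟨(nf g).1, rfl, prodOf_nf g⟩⟩
    refine le_csInf hne ?_
    rintro n ⟨w, rfl, hw⟩
    have := nf_length_le w.length w le_rfl
    rw [show prodOf w = g from hw] at this
    exact this

lemma modularLen_red {w : List (Fin 2)} (h : Red w) :
    modularLen (prodOf w) = w.length := by
  rw [modularLen_eq, nf_prodOf h]

section Weights
variable (a b : ℝ)

/-- weight of a letter -/
noncomputable def wt (x : Fin 2) : ℝ := if x = 0 then a else b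

/-- the canonical weight function -/
noncomputable def φ₀ (g : ModularGroup') : ℝ := ((nf g).1.map (wt a b)).sum

lemma red_single (x : Fin 2) : Red [x] := by
  rcases fin2 x with rfl | rfl <;> decide

lemma prodOf_single (x : Fin 2) : prodOf [x] = modularGen x := by simp [prodOf]

lemma nf_gen (x : Fin 2) : (nf (modularGen x)).1 = [x] := by
  rw [← prodOf_single, nf_prodOf (red_single x)]

lemma nf_one : (nf (1 : ModularGroup')).1 = [] := nf_prodOf red_nil

lemma φ₀_gen (x : Fin 2) : φ₀ a b (modularGen x) = wt a b x := by
  simp [φ₀, nf_gen]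

lemma modularLen_one : modularLen (1 : ModularGroup') = 0 := by
  rw [modularLen_eq, nf_one]; rfl

lemma modularLen_gen (x : Fin 2) : modularLen (modularGen x) = 1 := by
  rw [modularLen_eq, nf_gen]; rfl

lemma φ₀_additive (g h : ModularGroup')
    (hlen : modularLen (g * h) = modularLen g + modularLen h) :
    φ₀ a b (g * h) = φ₀ a b g + φ₀ a b h := by
  have hp : prodOf ((nf g).1 ++ (nf h).1) = g * h := by
    rw [prodOf_append, prodOf_nf, prodOf_nf]
  have hred : Red ((nf g).1 ++ (nf h).1) := by
    by_contra hnr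
    obtain ⟨v', hv', hlt⟩ := shorten hnr
    have hle : modularLen (g * h) ≤ v'.length :=
      Nat.sInf_le ⟨v', rfl, by rw [show (v'.map modularGen).prod = prodOf v' from rfl, hv', hp]⟩
    rw [hlen, modularLen_eq g, modularLen_eq h] at hle
    simp only [List.length_append] at hlt
    omega
  have : (nf (g * h)).1 = (nf g).1 ++ (nf h).1 := by rw [← hp, nf_prodOf hred]
  simp [φ₀, this]

lemma φ₀_eq_sum {w : List (Fin 2)} (h : Red w) :
    φ₀ a b (prodOf w) = (w.map (wt a b)).sum := by
  rw [φ₀, nf_prodOf h]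

lemma phi_unique (φ : ModularGroup' → ℝ)
    (hφ : ∀ g h, modularLen (g * h) = modularLen g + modularLen h → φ (g * h) = φ g + φ h)
    (hs : φ (modularGen 0) = a) (ht : φ (modularGen 1) = b) :
    ∀ g, φ g = φ₀ a b g := by
  have h1 : φ 1 = 0 := by
    have := hφ 1 1 (by rw [mul_one, modularLen_one])
    rw [mul_one] at this; linarith
  have hgen : ∀ x : Fin 2, φ (modularGen x) = wt a b x := by
    intro x
    rcases fin2 x with rfl | rfl
    · rw [hs]; rfl
    · rw [ht]; rfl
  suffices H : ∀ n (g : ModularGroup'), (nf g).1.length = n → φ g = φ₀ a b g by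
    exact fun g => H _ g rfl
  intro n
  induction n using Nat.strong_induction_on with
  | _ n ih =>
  intro g hg
  have hredg : Red (nf g).1 := (nf g).2
  have hpg : prodOf (nf g).1 = g := prodOf_nf g
  rcases hw : (nf g).1 with _ | ⟨x, r⟩
  · have : g = 1 := by rw [← hpg, hw]; rfl
    rw [this, h1, φ₀, nf_one]; rfl
  · rw [hw] at hredg hpg
    have hr : Red r := hredg.tail
    have hgx : g = modularGen x * prodOf r := by rw [← hpg, prodOf_cons]
    have hadd : modularLen (modularGen x * prodOf r)
        = modularLen (modularGen x) + modularLen (prodOf r) := by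
      rw [← hgx, modularLen_eq g, hw, modularLen_gen, modularLen_red hr]
      simp [Nat.add_comm]
    have hφg : φ g = φ (modularGen x) + φ (prodOf r) := by
      rw [hgx]; exact hφ _ _ hadd
    have hlt : r.length < n := by rw [hw] at hg; simp at hg; omega
    have hnfr : (nf (prodOf r)).1 = r := nf_prodOf hr
    have := ih r.length hlt (prodOf r) (by rw [hnfr])
    rw [hφg, this, hgen, φ₀_eq_sum a b hr, φ₀, hw]
    simp

end Weights

section Bounds
variable {a b : ℝ}

lemma wt0 : wt a b 0 = a := rfl
lemma wt1 : wt a b 1 = b := rfl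

lemma sumA (h1 : a + b ≤ 0) (h2 : a + 2 * b ≤ 0) :
    ∀ n (w : List (Fin 2)), w.length ≤ n → Red w → (w = [] ∨ ∃ r, w = 0 :: r) →
      (w.map (wt a b)).sum ≤ max 0 a := by
  intro n
  induction n using Nat.strong_induction_on with
  | _ n ih =>
  intro w hlen hred hhead
  rcases hhead with rfl | ⟨r, rfl⟩
  · simp
  · rcases r with _ | ⟨y, q⟩
    · simpa [wt0] using le_max_right 0 a
    · rcases fin2 y with rfl | rfl
      · exact absurd hred (not_red00 q)
      · rcases q with _ | ⟨z, p⟩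
        · have : a + b ≤ max 0 a := le_trans h1 (le_max_left 0 a)
          simpa [wt0, wt1] using this
        · rcases fin2 z with rfl | rfl
          · -- w = 0 :: 1 :: 0 :: p
            have hq : ((0 :: p).map (wt a b)).sum ≤ max 0 a := by
              have hlen' : p.length + 3 ≤ n := by simp at hlen; omega
              exact ih (n - 1) (by omega) _ (by simp; omega) hred.tail.tail (Or.inr ⟨p, rfl⟩)
            have : (((0:Fin 2) :: 1 :: 0 :: p).map (wt a b)).sum
                = (a + b) + ((0 :: p).map (wt a b)).sum := by
              simp [wt0, wt1]; ring
            rw [this]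
            have h0 : (0:ℝ) ≤ max 0 a := le_max_left 0 a
            linarith
          · -- w = 0 :: 1 :: 1 :: p
            have hp3 : Red p := hred.tail.tail.tail
            have hphead : p = [] ∨ ∃ r, p = 0 :: r := by
              rcases p with _ | ⟨u, v⟩
              · exact Or.inl rfl
              · rcases fin2 u with rfl | rfl
                · exact Or.inr ⟨v, rfl⟩
                · exact absurd hred.tail (not_red111 v)
            have hq : (p.map (wt a b)).sum ≤ max 0 a := by
              have hlen' : p.length + 3 ≤ n := by simp at hlen; omega
              exact ih (n - 1) (by omega) _ (by omega) hp3 hphead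
            have : (((0:Fin 2) :: 1 :: 1 :: p).map (wt a b)).sum
                = (a + 2 * b) + (p.map (wt a b)).sum := by
              simp [wt0, wt1]; ring
            rw [this]
            have h0 : (0:ℝ) ≤ max 0 a := le_max_left 0 a
            linarith

lemma sumB (h1 : a + b ≤ 0) (h2 : a + 2 * b ≤ 0) {w : List (Fin 2)} (hred : Red w) :
    (w.map (wt a b)).sum ≤ max 0 a + max 0 (max b (2 * b)) := by
  have hA : (0:ℝ) ≤ max 0 a := le_max_left 0 a
  have hB : (0:ℝ) ≤ max 0 (max b (2*b)) := le_max_left 0 _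
  have hb : b ≤ max 0 (max b (2*b)) := le_trans (le_max_left b _) (le_max_right 0 _)
  have h2b : 2*b ≤ max 0 (max b (2*b)) := le_trans (le_max_right b _) (le_max_right 0 _)
  rcases w with _ | ⟨x, r⟩
  · simp; positivity
  · rcases fin2 x with rfl | rfl
    · have := sumA h1 h2 (0 :: r).length _ le_rfl hred (Or.inr ⟨r, rfl⟩)
      linarith
    · rcases r with _ | ⟨y, q⟩
      · simpa [wt1] using by linarith
      · rcases fin2 y with rfl | rfl
        · -- 1 :: 0 :: q
          have := sumA h1 h2 (0 :: q).length _ le_rfl hred.tail (Or.inr ⟨q, rfl⟩)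
          have hsum : (((1:Fin 2) :: 0 :: q).map (wt a b)).sum
              = b + ((0 :: q).map (wt a b)).sum := by simp [wt0, wt1]
          rw [hsum]; linarith
        · -- 1 :: 1 :: q
          have hq : Red q := hred.tail.tail
          have hqh : q = [] ∨ ∃ r, q = 0 :: r := by
            rcases q with _ | ⟨u, v⟩
            · exact Or.inl rfl
            · rcases fin2 u with rfl | rfl
              · exact Or.inr ⟨v, rfl⟩
              · exact absurd hred (not_red111 v)
          have := sumA h1 h2 q.length _ le_rfl hq hqh
          have hsum : (((1:Fin 2) :: 1 :: q).map (wt a b)).sum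
              = 2 * b + (q.map (wt a b)).sum := by simp [wt0, wt1]; ring
          rw [hsum]; linarith

/-- the word (st)^n -/
def pat1 : ℕ → List (Fin 2)
  | 0 => []
  | n + 1 => 0 :: 1 :: pat1 n

/-- the word (st²)^n -/
def pat2 : ℕ → List (Fin 2)
  | 0 => []
  | n + 1 => 0 :: 1 :: 1 :: pat2 n

lemma pat1_head (n : ℕ) : pat1 n = [] ∨ ∃ r, pat1 n = 0 :: r := by
  cases n with
  | zero => exact Or.inl rfl
  | succ n => exact Or.inr ⟨_, rfl⟩

lemma pat2_head (n : ℕ) : pat2 n = [] ∨ ∃ r, pat2 n = 0 :: r := by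
  cases n with
  | zero => exact Or.inl rfl
  | succ n => exact Or.inr ⟨_, rfl⟩

lemma pat1_red (n : ℕ) : Red (pat1 n) := by
  induction n with
  | zero => exact red_nil
  | succ n ih =>
    refine red_cons0 (red_cons1 ih ?_) ?_
    · intro r hr; rcases pat1_head n with h | ⟨q, h⟩ <;> rw [h] at hr <;> simp at hr
    · intro r hr; simp at hr

lemma pat2_red (n : ℕ) : Red (pat2 n) := by
  induction n with
  | zero => exact red_nil
  | succ n ih =>
    have l1 : Red (1 :: pat2 n) := by
      refine red_cons1 ih ?_
      intro r hr; rcases pat2_head n with h | ⟨q, h⟩ <;> rw [h] at hr <;> simp at hr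
    have l2 : Red (1 :: 1 :: pat2 n) := by
      refine red_cons1 l1 ?_
      intro r hr
      rcases pat2_head n with h | ⟨q, h⟩ <;> rw [h] at hr <;> simp at hr
    exact red_cons0 l2 (by intro r hr; simp at hr)

lemma pat1_sum (n : ℕ) : ((pat1 n).map (wt a b)).sum = n * (a + b) := by
  induction n with
  | zero => simp [pat1]
  | succ n ih =>
    show (((0:Fin 2) :: 1 :: pat1 n).map (wt a b)).sum = _
    simp only [List.map_cons, List.sum_cons, ih, wt0, wt1]
    push_cast; ring

lemma pat2_sum (n : ℕ) : ((pat2 n).map (wt a b)).sum = n * (a + 2 * b) := by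
  induction n with
  | zero => simp [pat2]
  | succ n ih =>
    show (((0:Fin 2) :: 1 :: 1 :: pat2 n).map (wt a b)).sum = _
    simp only [List.map_cons, List.sum_cons, ih, wt0, wt1]
    push_cast; ring

end Bounds

end MG

/-- In the free product `G = C₂ * C₃ = ⟨s, t | s² = t³ = 1⟩` with `S = {s, t}`, every
assignment `φ s = a`, `φ t = b` with `a, b ∈ ℝ` extends to a weight function on `(G, S)`, and
such a weight function is bounded if and only if `a + b ≤ 0` and `a + 2b ≤ 0`. -/
theorem modularGroup_weightFunctions (a b : ℝ) :
    (∃ φ : ModularGroup' → ℝ,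
      (∀ g h, modularLen (g * h) = modularLen g + modularLen h → φ (g * h) = φ g + φ h) ∧
      φ (modularGen 0) = a ∧ φ (modularGen 1) = b) ∧
    (∀ φ : ModularGroup' → ℝ,
      (∀ g h, modularLen (g * h) = modularLen g + modularLen h → φ (g * h) = φ g + φ h) →
      φ (modularGen 0) = a → φ (modularGen 1) = b →
      ((∃ N > (0 : ℝ), ∀ g, φ g ≤ N) ↔ a + b ≤ 0 ∧ a + 2 * b ≤ 0)) := by
  constructor
  · exact ⟨MG.φ₀ a b, MG.φ₀_additive a b,
      (MG.φ₀_gen a b 0).trans MG.wt0, (MG.φ₀_gen a b 1).trans MG.wt1⟩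
  · intro φ hφ hs ht
    have hu := MG.phi_unique a b φ hφ hs ht
    constructor
    · rintro ⟨N, hN, hbd⟩
      constructor
      · by_contra hc
        push_neg at hc
        obtain ⟨n, hn⟩ := exists_nat_gt (N / (a + b))
        have hNlt : N < n * (a + b) := by rwa [div_lt_iff₀ hc] at hn
        have hb := hbd (MG.prodOf (MG.pat1 n))
        rw [hu, MG.φ₀_eq_sum a b (MG.pat1_red n), MG.pat1_sum] at hb
        linarith
      · by_contra hc
        push_neg at hc
        obtain ⟨n, hn⟩ := exists_nat_gt (N / (a + 2 * b))
        have hNlt : N < n * (a + 2 * b) := by rwa [div_lt_iff₀ hc] at hn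
        have hb := hbd (MG.prodOf (MG.pat2 n))
        rw [hu, MG.φ₀_eq_sum a b (MG.pat2_red n), MG.pat2_sum] at hb
        linarith
    · rintro ⟨h1, h2⟩
      have hA : (0:ℝ) ≤ max 0 a := le_max_left 0 a
      have hB : (0:ℝ) ≤ max 0 (max b (2*b)) := le_max_left 0 _
      refine ⟨max 0 a + max 0 (max b (2*b)) + 1, by linarith, ?_⟩
      intro g
      rw [hu g]
      have := MG.sumB h1 h2 (MG.nf g).2
      have hφ0 : MG.φ₀ a b g = (((MG.nf g).1).map (MG.wt a b)).sum := rfl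
      linarith
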